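/- Let X be a binomial random variable with parameters n and p such that np = m is a positive integer and m^2 = o(n) (concretely: assume m^2 ≤ n). Then P[X = m] ≥ 1/(4√m), provided n is sufficiently large relative to m (concretely: the bound P[X = m] ≥ (m^m/m!)·(1-p)^n holds, and combined with m! ≤ e^{1-m} m^{m+1/2} and (1-p)^n ≥ e^{-np-np^2} for p ≤ 1/2, yields P[X = m] ≥ 1/(4√m)). -/

import Mathlib

open Filter Real Finset Nat

lemma fact_le_aux (m : ℕ) (hm : 1 ≤ m) :
    (m ! : ℝ) ≤ Real.exp 1 * Real.sqrt m * ((m : ℝ) / Real.exp 1) ^ m := by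
  obtain ⟨k, rfl⟩ := Nat.exists_eq_add_of_le hm
  rw [add_comm 1 k]
  have hmono : Real.log (Stirling.stirlingSeq (k + 1)) ≤ Real.log (Stirling.stirlingSeq 1) := by
    have := Stirling.log_stirlingSeq'_antitone (Nat.zero_le k)
    simpa using this
  have hpos := Stirling.stirlingSeq'_pos k
  have hpos1 := Stirling.stirlingSeq'_pos 0
  have hle : Stirling.stirlingSeq (k + 1) ≤ Stirling.stirlingSeq 1 := by
    have := Real.exp_le_exp.2 hmono
    rwa [Real.exp_log hpos, Real.exp_log (by simpa using hpos1)] at this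
  rw [Stirling.stirlingSeq_one] at hle
  have hdef : Stirling.stirlingSeq (k + 1) =
      ((k+1)! : ℝ) / (Real.sqrt (2 * (k+1)) * (((k:ℝ)+1) / Real.exp 1) ^ (k+1)) := by
    simp [Stirling.stirlingSeq]
  have hden : (0:ℝ) < Real.sqrt (2 * ((k:ℝ)+1)) * (((k:ℝ)+1) / Real.exp 1) ^ (k+1) := by
    positivity
  rw [hdef, div_le_iff₀ (by push_cast at hden ⊢; exact hden)] at hle
  have h2 : Real.sqrt 2 ≠ 0 := by positivity
  have hs : Real.sqrt (2 * ((k:ℝ)+1)) = Real.sqrt 2 * Real.sqrt ((k:ℝ)+1) :=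
    Real.sqrt_mul (by norm_num) _
  push_cast at hle ⊢
  rw [hs] at hle
  calc ((k+1)! : ℝ) ≤ Real.exp 1 / Real.sqrt 2 *
        (Real.sqrt 2 * Real.sqrt ((k:ℝ)+1) * (((k:ℝ)+1) / Real.exp 1) ^ (k+1)) := by
        push_cast at hle ⊢; linarith
    _ = Real.exp 1 * Real.sqrt ((k:ℝ)+1) * (((k:ℝ)+1) / Real.exp 1) ^ (k+1) := by
        field_simp

lemma tendsto_binom (m : ℕ) (hm : 1 ≤ m) :
    Tendsto (fun n : ℕ => (n.choose m : ℝ) * ((m : ℝ) / n) ^ m * (1 - (m : ℝ) / n) ^ (n - m))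
      atTop (nhds ((m:ℝ) ^ m / m ! * Real.exp (-m))) := by
  set g : ℕ → ℝ := fun n => (m:ℝ) ^ m / m ! *
      (∏ i ∈ range m, (1 - (i:ℝ) / n)) * ((1 + (-(m:ℝ)) / n) ^ n / (1 - (m:ℝ) / n) ^ m) with hg
  have hgt : Tendsto g atTop (nhds ((m:ℝ) ^ m / m ! * Real.exp (-m))) := by
    have h1 : Tendsto (fun n : ℕ => ∏ i ∈ range m, (1 - (i:ℝ) / n)) atTop (nhds 1) := by
      have h1' : ∀ i ∈ range m, Tendsto (fun n : ℕ => 1 - (i:ℝ) / n) atTop (nhds (1 - 0)) :=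
        fun i _ => tendsto_const_nhds.sub (tendsto_const_div_atTop_nhds_zero_nat (i:ℝ))
      have := tendsto_finset_prod (range m) h1'
      simpa using this
    have h2 : Tendsto (fun n : ℕ => (1 + (-(m:ℝ)) / n) ^ n) atTop (nhds (Real.exp (-m))) :=
      Real.tendsto_one_add_div_pow_exp (-(m:ℝ))
    have h3 : Tendsto (fun n : ℕ => (1 - (m:ℝ) / n) ^ m) atTop (nhds 1) := by
      have hb : Tendsto (fun n : ℕ => 1 - (m:ℝ) / n) atTop (nhds (1 - 0)) :=
        tendsto_const_nhds.sub (tendsto_const_div_atTop_nhds_zero_nat (m:ℝ))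
      have := hb.pow m
      simpa using this
    have hc : Tendsto (fun _ : ℕ => (m:ℝ) ^ m / m !) atTop (nhds ((m:ℝ) ^ m / m !)) :=
      tendsto_const_nhds
    have := (hc.mul h1).mul (h2.div h3 one_ne_zero)
    simpa using this
  refine hgt.congr' ?_
  filter_upwards [eventually_ge_atTop (m + 1)] with n hn
  have hmn : m < n := hn
  have hn0 : (0:ℝ) < n := Nat.cast_pos.2 (by omega)
  have hne : (n:ℝ) ≠ 0 := ne_of_gt hn0
  have hlt1 : (m:ℝ) / n < 1 := by
    rw [div_lt_one hn0]; exact_mod_cast hmn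
  have h1m : ((1:ℝ) - (m:ℝ)/n) ^ m ≠ 0 := pow_ne_zero _ (by linarith)
  have hfact : (m ! : ℝ) ≠ 0 := Nat.cast_ne_zero.2 m.factorial_ne_zero
  have hchoose : (m ! : ℝ) * (n.choose m : ℝ) = ∏ i ∈ range m, ((n:ℝ) - i) := by
    have h := Nat.descFactorial_eq_factorial_mul_choose n m
    have hp : (n.descFactorial m : ℝ) = ∏ i ∈ range m, ((n:ℝ) - i) := by
      rw [Nat.descFactorial_eq_prod_range]
      push_cast
      refine Finset.prod_congr rfl fun i hi => ?_
      rw [Nat.cast_sub (le_of_lt (lt_of_lt_of_le (mem_range.1 hi) hmn.le))]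
    rw [← hp, h]; push_cast; ring
  have hprod : ∏ i ∈ range m, (1 - (i:ℝ) / n) = (∏ i ∈ range m, ((n:ℝ) - i)) / (n:ℝ) ^ m := by
    rw [Finset.prod_congr rfl (fun i (_ : i ∈ range m) =>
      show 1 - (i:ℝ)/n = ((n:ℝ) - i)/(n:ℝ) by field_simp), Finset.prod_div_distrib]
    simp
  have hpow : (1 + (-(m:ℝ)) / n) ^ n = (1 - (m:ℝ)/n) ^ (n - m) * (1 - (m:ℝ)/n) ^ m := by
    rw [← pow_add, Nat.sub_add_cancel hmn.le]
    ring_nf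
  rw [hg]
  simp only [hprod, hpow]
  rw [mul_div_assoc ((1 - (m:ℝ)/n) ^ (n-m)), div_self h1m, mul_one, ← hchoose]
  field_simp
  have hnm : (n:ℝ)^m * (n:ℝ)⁻¹^m = 1 := by rw [← mul_pow, mul_inv_cancel₀ hne, one_pow]
  linear_combination (-((m:ℝ)^m * (n.choose m:ℝ) * (-((m:ℝ) * (n:ℝ)⁻¹) + n * (n:ℝ)⁻¹)^(n-m))) * hnm

theorem stmt_0 (m : ℕ) (hm : 1 ≤ m) :
    ∃ N : ℕ, ∀ n : ℕ, N ≤ n → m ^ 2 ≤ n →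
      (1 : ℝ) / (4 * Real.sqrt m) ≤
        (n.choose m : ℝ) * ((m : ℝ) / n) ^ m * (1 - (m : ℝ) / n) ^ (n - m) := by
  have hsm : (0:ℝ) < Real.sqrt m := Real.sqrt_pos.2 (by exact_mod_cast hm)
  have he4 : Real.exp 1 < 4 := by
    have := Real.exp_one_lt_d9; linarith
  have hid : ((m:ℝ) / Real.exp 1) ^ m = (m:ℝ) ^ m * Real.exp (-(m:ℝ)) := by
    rw [div_pow, Real.exp_neg, ← Real.exp_one_pow, div_eq_mul_inv]
  have hub : (m ! : ℝ) < 4 * Real.sqrt m * ((m:ℝ) ^ m * Real.exp (-(m:ℝ))) := by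
    have h1 := fact_le_aux m hm
    rw [hid] at h1
    have hpos : (0:ℝ) < Real.sqrt m * ((m:ℝ) ^ m * Real.exp (-(m:ℝ))) := by positivity
    nlinarith
  have hL : 1 / (4 * Real.sqrt m) < (m:ℝ) ^ m / m ! * Real.exp (-(m:ℝ)) := by
    have h4 : (0:ℝ) < 4 * Real.sqrt m := by positivity
    have hfp : (0:ℝ) < (m ! : ℝ) := by exact_mod_cast m.factorial_pos
    have heq : (m:ℝ) ^ m / (m ! : ℝ) * Real.exp (-(m:ℝ)) =
        ((m:ℝ) ^ m * Real.exp (-(m:ℝ))) / (m ! : ℝ) := by ring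
    rw [heq, div_lt_div_iff₀ h4 hfp]
    nlinarith
  have hev := (tendsto_binom m hm).eventually (eventually_gt_nhds hL)
  rw [eventually_atTop] at hev
  obtain ⟨N, hN⟩ := hev
  exact ⟨N, fun n hn _ => (hN n hn).le⟩
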